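/- arXiv:math/0602414 — 3 statements merged into one kernel-verified Lean document; each statement's English description precedes it below -/
import Mathlib

section
/- For all X, Y ∈ su(3) one has ‖[X,Y]‖ ≤ (1/2)‖X‖‖Y‖; consequently, for every orthonormal triple X, Y, Z in su(3) the calibration inequality |2⟨[X,Y],Z⟩| ≤ 1 holds. -/
noncomputable section
open Matrix

attribute [local instance] LieRing.ofAssociativeRing

/-- `su n`: the real Lie algebra of traceless skew-Hermitian complex `n × n` matrices, as a real
Lie subalgebra of the matrix algebra. -/
def su (n : ℕ) : LieSubalgebra ℝ (Matrix (Fin n) (Fin n) ℂ) where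
  carrier := {X | Xᴴ = -X ∧ X.trace = 0}
  add_mem' := by
    rintro X Y ⟨h1, h2⟩ ⟨h3, h4⟩
    refine ⟨?_, ?_⟩
    · rw [Matrix.conjTranspose_add, h1, h3, neg_add]
    · rw [Matrix.trace_add, h2, h4, add_zero]
  zero_mem' := by
    constructor <;> simp
  smul_mem' := by
    rintro c X ⟨h1, h2⟩
    refine ⟨?_, ?_⟩
    · rw [Matrix.conjTranspose_smul, h1, star_trivial, smul_neg]
    · rw [Matrix.trace_smul, h2, smul_zero]
  lie_mem' := by
    rintro X Y ⟨h1, h2⟩ ⟨h3, h4⟩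
    refine ⟨?_, ?_⟩
    · rw [Ring.lie_def, Matrix.conjTranspose_sub, Matrix.conjTranspose_mul,
        Matrix.conjTranspose_mul, h1, h3, neg_mul_neg, neg_mul_neg, neg_sub]
    · rw [Ring.lie_def, Matrix.trace_sub, Matrix.trace_mul_comm, sub_self]

/-- The inner product `⟨X,Y⟩ = -8 Re tr (XY)` on `su 3`. -/
def innSU (X Y : su 3) : ℝ :=
  -8 * (((X : Matrix (Fin 3) (Fin 3) ℂ) * (Y : Matrix (Fin 3) (Fin 3) ℂ)).trace).re

/-- The associated norm on `su 3`. -/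
def normSU (X : su 3) : ℝ := Real.sqrt (innSU X X)

set_option linter.unusedSectionVars false

namespace SU3Aux

variable {n : Type*} [Fintype n] [DecidableEq n]

/-- Squared Frobenius norm. -/
def frob (M : Matrix n n ℂ) : ℝ := ∑ i, ∑ j, Complex.normSq (M i j)

lemma frob_nonneg (M : Matrix n n ℂ) : 0 ≤ frob M := by
  apply Finset.sum_nonneg; intro i _
  exact Finset.sum_nonneg fun j _ => Complex.normSq_nonneg _

lemma frob_eq_trace (M : Matrix n n ℂ) : frob M = ((M * Mᴴ).trace).re := by
  simp [frob, Matrix.trace, Matrix.mul_apply, Matrix.diag, Matrix.conjTranspose_apply,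
    Complex.mul_conj]

lemma frob_conj_unitary (U M : Matrix n n ℂ) (hU : U ∈ Matrix.unitaryGroup n ℂ) :
    frob (U * M * star U) = frob M := by
  rw [frob_eq_trace, frob_eq_trace]
  congr 1
  have h1 : Uᴴ * U = 1 := by rw [← Matrix.star_eq_conjTranspose]; exact hU.1
  have key : (U * M * star U) * (U * M * star U)ᴴ = U * (M * Mᴴ) * Uᴴ := by
    rw [Matrix.star_eq_conjTranspose]
    simp only [Matrix.conjTranspose_mul, Matrix.conjTranspose_conjTranspose, Matrix.mul_assoc]
    rw [show Uᴴ * (U * (Mᴴ * Uᴴ)) = (Uᴴ * U) * (Mᴴ * Uᴴ) by rw [Matrix.mul_assoc], h1,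
      Matrix.one_mul]
  rw [key, Matrix.trace_mul_comm, ← Matrix.mul_assoc, h1, Matrix.one_mul]

lemma frob_smul (c : ℂ) (M : Matrix n n ℂ) :
    frob (c • M) = Complex.normSq c * frob M := by
  simp [frob, Complex.normSq_mul, Finset.mul_sum]

lemma frob_diag_comm_le (d : n → ℝ) (C : Matrix n n ℂ) :
    frob (diagonal (fun i => (d i : ℂ)) * C - C * diagonal (fun i => (d i : ℂ)))
      ≤ 2 * (∑ i, d i ^ 2) * frob C := by
  have key : ∀ i j, Complex.normSq
      ((diagonal (fun i => (d i : ℂ)) * C - C * diagonal (fun i => (d i : ℂ))) i j)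
      ≤ 2 * (∑ k, d k ^ 2) * Complex.normSq (C i j) := by
    intro i j
    have he : (diagonal (fun i => (d i : ℂ)) * C - C * diagonal (fun i => (d i : ℂ))) i j
        = ((d i - d j : ℝ) : ℂ) * C i j := by
      simp only [Matrix.sub_apply, Matrix.diagonal_mul, Matrix.mul_diagonal]
      push_cast
      ring
    rw [he, Complex.normSq_mul, Complex.normSq_ofReal]
    have hdd : (d i - d j) * (d i - d j) ≤ 2 * (∑ k, d k ^ 2) := by
      rcases eq_or_ne i j with rfl | hij
      · simp
        positivity
      · have h1 : d i ^ 2 + d j ^ 2 ≤ ∑ k, d k ^ 2 := by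
          have := Finset.sum_le_sum_of_subset_of_nonneg
            (Finset.subset_univ ({i, j} : Finset n))
            (fun k _ _ => sq_nonneg (d k))
          rwa [Finset.sum_pair hij] at this
        nlinarith [sq_nonneg (d i + d j)]
    nlinarith [Complex.normSq_nonneg (C i j)]
  calc frob _ ≤ ∑ i, ∑ j, 2 * (∑ k, d k ^ 2) * Complex.normSq (C i j) := by
        apply Finset.sum_le_sum; intro i _
        exact Finset.sum_le_sum fun j _ => key i j
    _ = 2 * (∑ k, d k ^ 2) * frob C := by
        simp [frob, Finset.mul_sum]

lemma frob_diagonal (d : n → ℝ) :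
    frob (diagonal (fun i => (d i : ℂ))) = ∑ i, d i ^ 2 := by
  simp [frob, Matrix.diagonal_apply, apply_ite Complex.normSq, Finset.sum_ite_eq',
    Complex.normSq_ofReal, sq]

/-- Böttcher–Wenzel-type bound for skew-Hermitian `X`. -/
lemma frob_comm_le (X Y : Matrix n n ℂ) (hX : Xᴴ = -X) :
    frob (X * Y - Y * X) ≤ 2 * frob X * frob Y := by
  set A : Matrix n n ℂ := Complex.I • X with hA_def
  have hA : A.IsHermitian := by
    unfold Matrix.IsHermitian
    rw [hA_def, Matrix.conjTranspose_smul, hX]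
    simp
  set U : Matrix n n ℂ := (hA.eigenvectorUnitary : Matrix n n ℂ) with hU_def
  have hUmem : U ∈ Matrix.unitaryGroup n ℂ := hA.eigenvectorUnitary.2
  have hcomp : (RCLike.ofReal ∘ hA.eigenvalues : n → ℂ)
      = (fun i => ((hA.eigenvalues i : ℝ) : ℂ)) := rfl
  set D : Matrix n n ℂ := diagonal (fun i => ((hA.eigenvalues i : ℝ) : ℂ)) with hD_def
  have hspec : A = U * D * star U := by
    have := hA.spectral_theorem
    rwa [hcomp] at this
  have hUs : U * star U = 1 := hUmem.2
  have hsU : star U * U = 1 := hUmem.1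
  set C : Matrix n n ℂ := star U * Y * U with hC_def
  have hXA : X = (-Complex.I) • A := by
    rw [hA_def, smul_smul]; simp
  have hcomm : X * Y - Y * X = (-Complex.I) • (A * Y - Y * A) := by
    rw [hXA, Matrix.smul_mul, Matrix.mul_smul, smul_sub]
  have hfX : frob X = frob A := by
    rw [hA_def, frob_smul]; simp
  have e1 : U * (D * C) * star U = A * Y := by
    rw [hC_def, hspec]
    simp only [Matrix.mul_assoc]
    rw [hUs, Matrix.mul_one]
  have e2 : U * (C * D) * star U = Y * A := by
    rw [hC_def, hspec]
    simp only [Matrix.mul_assoc]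
    rw [← Matrix.mul_assoc U (star U), hUs, Matrix.one_mul]
  have hAY : A * Y - Y * A = U * (D * C - C * D) * star U := by
    rw [Matrix.mul_sub, Matrix.sub_mul, e1, e2]
  have h1 : frob (X * Y - Y * X) = frob (D * C - C * D) := by
    rw [hcomm, frob_smul, hAY, frob_conj_unitary _ _ hUmem]
    simp
  have h2 : frob C = frob Y := by
    have := frob_conj_unitary (star U) Y (Unitary.star_mem hUmem)
    rwa [star_star] at this
  have h3 : frob A = frob D := by
    rw [hspec, frob_conj_unitary _ _ hUmem]
  have h4 : frob D = ∑ i, hA.eigenvalues i ^ 2 := by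
    rw [hD_def]; exact frob_diagonal _
  have h5 : frob (D * C - C * D) ≤ 2 * (∑ i, hA.eigenvalues i ^ 2) * frob C := by
    rw [hD_def]; exact frob_diag_comm_le hA.eigenvalues C
  calc frob (X * Y - Y * X) = frob (D * C - C * D) := h1
    _ ≤ 2 * (∑ i, hA.eigenvalues i ^ 2) * frob C := h5
    _ = 2 * frob X * frob Y := by rw [h2, ← h4, ← h3, ← hfX]

def ent (P : su 3) : (Fin 3 × Fin 3) × Bool → ℝ := fun p =>
  cond p.2 ((P : Matrix (Fin 3) (Fin 3) ℂ) p.1.1 p.1.2).im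
    ((P : Matrix (Fin 3) (Fin 3) ℂ) p.1.1 p.1.2).re

lemma innSU_eq_sum (P Q : su 3) : innSU P Q = 8 * ∑ p, ent P p * ent Q p := by
  have hQ : (Q : Matrix (Fin 3) (Fin 3) ℂ)ᴴ = -(Q : Matrix (Fin 3) (Fin 3) ℂ) := Q.2.1
  have hij : ∀ i j, (Q : Matrix (Fin 3) (Fin 3) ℂ) j i
      = -(starRingEnd ℂ) ((Q : Matrix (Fin 3) (Fin 3) ℂ) i j) := by
    intro i j
    have h := congrFun (congrFun hQ j) i
    rw [Matrix.conjTranspose_apply, Matrix.neg_apply] at h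
    rw [starRingEnd_apply, h, neg_neg]
  have key : ∀ i j : Fin 3, ((P : Matrix (Fin 3) (Fin 3) ℂ) i j
        * (Q : Matrix (Fin 3) (Fin 3) ℂ) j i).re
      = -(((P : Matrix (Fin 3) (Fin 3) ℂ) i j).re * ((Q : Matrix (Fin 3) (Fin 3) ℂ) i j).re
        + ((P : Matrix (Fin 3) (Fin 3) ℂ) i j).im * ((Q : Matrix (Fin 3) (Fin 3) ℂ) i j).im) := by
    intro i j
    rw [hij i j]
    simp [Complex.mul_re]
  rw [innSU]
  simp only [Matrix.trace, Matrix.diag, Matrix.mul_apply, Complex.re_sum, key, ent,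
    Fintype.sum_prod_type, Fintype.sum_bool, cond_true, cond_false, Finset.sum_neg_distrib,
    neg_mul_neg]
  congr 1
  apply Finset.sum_congr rfl
  intro i _
  apply Finset.sum_congr rfl
  intro j _
  ring

lemma ent_sq_sum (P : su 3) : ∑ p, ent P p ^ 2 = frob (P : Matrix (Fin 3) (Fin 3) ℂ) := by
  simp only [ent, frob, Fintype.sum_prod_type, Fintype.sum_bool, cond_true, cond_false,
    Complex.normSq_apply]
  apply Finset.sum_congr rfl
  intro i _
  apply Finset.sum_congr rfl
  intro j _
  ring

lemma cs (P Q : su 3) : |innSU P Q| ≤ normSU P * normSU Q := by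
  have hfr : ∀ R : su 3, innSU R R = 8 * (∑ p, ent R p ^ 2) := by
    intro R
    rw [innSU_eq_sum R R]
    simp [sq]
  have hP : (0:ℝ) ≤ ∑ p : (Fin 3 × Fin 3) × Bool, ent P p ^ 2 :=
    Finset.sum_nonneg fun p _ => sq_nonneg _
  have hcs := Finset.sum_mul_sq_le_sq_mul_sq Finset.univ (ent P) (ent Q)
  rw [innSU_eq_sum, normSU, normSU, hfr, hfr, abs_mul]
  have h8 : |(8:ℝ)| = Real.sqrt 8 * Real.sqrt 8 := by
    rw [Real.mul_self_sqrt (by norm_num : (0:ℝ) ≤ 8)]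
    norm_num
  have habs : |∑ p, ent P p * ent Q p|
      ≤ Real.sqrt (∑ p, ent P p ^ 2) * Real.sqrt (∑ p, ent Q p ^ 2) := by
    rw [← Real.sqrt_sq_eq_abs, ← Real.sqrt_mul hP]
    exact Real.sqrt_le_sqrt hcs
  rw [Real.sqrt_mul (by norm_num : (0:ℝ) ≤ 8), Real.sqrt_mul (by norm_num : (0:ℝ) ≤ 8)]
  calc |(8:ℝ)| * |∑ p, ent P p * ent Q p|
      ≤ |(8:ℝ)| * (Real.sqrt (∑ p, ent P p ^ 2) * Real.sqrt (∑ p, ent Q p ^ 2)) := by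
        apply mul_le_mul_of_nonneg_left habs (abs_nonneg _)
    _ = Real.sqrt 8 * Real.sqrt (∑ p, ent P p ^ 2) * (Real.sqrt 8 * Real.sqrt (∑ p, ent Q p ^ 2)) := by
        rw [h8]; ring


lemma innSU_self (X : su 3) : innSU X X = 8 * frob (X : Matrix (Fin 3) (Fin 3) ℂ) := by
  have hX : (X : Matrix (Fin 3) (Fin 3) ℂ)ᴴ = -(X : Matrix (Fin 3) (Fin 3) ℂ) := X.2.1
  have h : (X : Matrix (Fin 3) (Fin 3) ℂ) * (X : Matrix (Fin 3) (Fin 3) ℂ)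
      = -((X : Matrix (Fin 3) (Fin 3) ℂ) * (X : Matrix (Fin 3) (Fin 3) ℂ)ᴴ) := by
    rw [hX, Matrix.mul_neg, neg_neg]
  rw [innSU, h, frob_eq_trace]
  simp

lemma bracket_norm_le (X Y : su 3) : normSU ⁅X, Y⁆ ≤ (1/2) * normSU X * normSU Y := by
  have hX : (X : Matrix (Fin 3) (Fin 3) ℂ)ᴴ = -(X : Matrix (Fin 3) (Fin 3) ℂ) := X.2.1
  have hb : ((⁅X, Y⁆ : su 3) : Matrix (Fin 3) (Fin 3) ℂ)
      = (X : Matrix (Fin 3) (Fin 3) ℂ) * Y - (Y : Matrix (Fin 3) (Fin 3) ℂ) * X := by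
    rw [LieSubalgebra.coe_bracket, Ring.lie_def]
  have hbw := frob_comm_le (X : Matrix (Fin 3) (Fin 3) ℂ) (Y : Matrix (Fin 3) (Fin 3) ℂ) hX
  set a := frob (X : Matrix (Fin 3) (Fin 3) ℂ) with ha_def
  set b := frob (Y : Matrix (Fin 3) (Fin 3) ℂ) with hb_def
  have ha : 0 ≤ a := frob_nonneg _
  have hb0 : 0 ≤ b := frob_nonneg _
  rw [normSU, normSU, normSU, innSU_self, innSU_self, innSU_self, hb]
  have h1 : Real.sqrt (8 * frob ((X : Matrix (Fin 3) (Fin 3) ℂ) * (Y : Matrix (Fin 3) (Fin 3) ℂ)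
        - (Y : Matrix (Fin 3) (Fin 3) ℂ) * (X : Matrix (Fin 3) (Fin 3) ℂ)))
      ≤ Real.sqrt (16 * (a * b)) := Real.sqrt_le_sqrt (by nlinarith)
  have h2 : Real.sqrt (16 * (a * b)) = 1/2 * Real.sqrt (8 * a) * Real.sqrt (8 * b) := by
    rw [Real.sqrt_mul (by norm_num : (0:ℝ) ≤ 16), Real.sqrt_mul ha,
      Real.sqrt_mul (by norm_num : (0:ℝ) ≤ 8), Real.sqrt_mul (by norm_num : (0:ℝ) ≤ 8)]
    have s16 : Real.sqrt 16 = 4 := by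
      rw [show (16:ℝ) = 4^2 by norm_num, Real.sqrt_sq (by norm_num : (0:ℝ) ≤ 4)]
    have s8 : Real.sqrt 8 ^ 2 = 8 := Real.sq_sqrt (by norm_num)
    rw [s16]
    linear_combination (-(1/2) * Real.sqrt a * Real.sqrt b) * s8
  rw [h2] at h1
  exact h1


theorem mainT :
    (∀ X Y : su 3, normSU ⁅X, Y⁆ ≤ (1/2) * normSU X * normSU Y)
    ∧ (∀ X Y Z : su 3, innSU X X = 1 → innSU Y Y = 1 → innSU Z Z = 1 →
        innSU X Y = 0 → innSU X Z = 0 → innSU Y Z = 0 →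
        |2 * innSU ⁅X, Y⁆ Z| ≤ 1) := by
  refine ⟨bracket_norm_le, ?_⟩
  intro X Y Z hXX hYY hZZ _ _ _
  have hW := bracket_norm_le X Y
  have hnX : normSU X = 1 := by rw [normSU, hXX, Real.sqrt_one]
  have hnY : normSU Y = 1 := by rw [normSU, hYY, Real.sqrt_one]
  have hnZ : normSU Z = 1 := by rw [normSU, hZZ, Real.sqrt_one]
  have hcs := cs ⁅X, Y⁆ Z
  rw [hnZ, mul_one] at hcs
  rw [hnX, hnY] at hW
  rw [abs_mul]
  have h2 : |(2:ℝ)| = 2 := by norm_num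
  rw [h2]
  nlinarith [abs_nonneg (innSU ⁅X, Y⁆ Z)]


end SU3Aux

/-- For all `X, Y ∈ su(3)` one has `‖[X,Y]‖ ≤ (1/2)‖X‖‖Y‖`; consequently, for
every orthonormal triple `X, Y, Z` in `su(3)` the calibration inequality `|2⟨[X,Y],Z⟩| ≤ 1`
holds. -/
theorem su3_bracket_norm_ineq_and_calibration_bound :
    (∀ X Y : su 3, normSU ⁅X, Y⁆ ≤ (1/2) * normSU X * normSU Y)
    ∧ (∀ X Y Z : su 3, innSU X X = 1 → innSU Y Y = 1 → innSU Z Z = 1 →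
        innSU X Y = 0 → innSU X Z = 0 → innSU Y Z = 0 →
        |2 * innSU ⁅X, Y⁆ Z| ≤ 1) := by
  exact ⟨SU3Aux.bracket_norm_le, fun X Y Z hXX hYY hZZ hXY hXZ hYZ =>
    SU3Aux.mainT.2 X Y Z hXX hYY hZZ hXY hXZ hYZ⟩
end
end

section
/- Let ρ₀ be the PSU(3)-form on Euclidean ℝ⁸ and [·,·]_{ρ₀} the induced bracket. Then [·,·]_{ρ₀} satisfies the Jacobi identity, and the resulting Lie algebra (ℝ⁸, [·,·]_{ρ₀}) is isomorphic as a real Lie algebra to su(3). -/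
noncomputable section

/-- The standard basis vectors of ℝ⁸ (`e i` is `eᵢ₊₁` in the paper's notation). -/
def e (i : Fin 8) : Fin 8 → ℝ := fun j => if i = j then 1 else 0

/-- The standard inner product on ℝ⁸. -/
def dot (x y : Fin 8 → ℝ) : ℝ := ∑ i, x i * y i

/-- The alternating 3-form `eⁱ ∧ eʲ ∧ eᵏ` on ℝ⁸ (indices in `Fin 8`). -/
def wedge3 (i j k : Fin 8) : AlternatingMap ℝ (Fin 8 → ℝ) ℝ (Fin 3) :=
  (Matrix.detRowAlternating : AlternatingMap ℝ (Fin 3 → ℝ) ℝ (Fin 3)).compLinearMap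
    (LinearMap.funLeft ℝ ℝ ![i, j, k])

/-- The PSU(3)-form `ρ₀ = ½e^{123} + ¼e^1∧(e^{47}−e^{56}) + ¼e^2∧(e^{46}+e^{57})
+ ¼e^3∧(e^{45}−e^{67}) + (√3/4)e^8∧(e^{45}+e^{67})` (indices shifted down by one). -/
def ρ₀ : AlternatingMap ℝ (Fin 8 → ℝ) ℝ (Fin 3) :=
  (1/2 : ℝ) • wedge3 0 1 2
  + (1/4 : ℝ) • (wedge3 0 3 6 - wedge3 0 4 5)
  + (1/4 : ℝ) • (wedge3 1 3 5 + wedge3 1 4 6)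
  + (1/4 : ℝ) • (wedge3 2 3 4 - wedge3 2 5 6)
  + (Real.sqrt 3 / 4) • (wedge3 7 3 4 + wedge3 7 5 6)

/-- The bracket `[x,y]_ρ` induced by a 3-form `ρ`, determined by `⟨[x,y]_ρ, z⟩ = ρ(x,y,z)`. -/
def bracketOf (ρ : AlternatingMap ℝ (Fin 8 → ℝ) ℝ (Fin 3)) (x y : Fin 8 → ℝ) : Fin 8 → ℝ :=
  fun k => ρ ![x, y, e k]
open Matrix

attribute [local instance 100] LieRing.ofAssociativeRing

set_option maxHeartbeats 1000000

namespace PSU3Aux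

/-- Explicit matrix realization: `x ↦ Σ xₐ Mₐ` where `Mₐ = -(i/4)λₐ₊₁` (Gell-Mann matrices). -/
def Fm (x : Fin 8 → ℝ) : Matrix (Fin 3) (Fin 3) ℂ :=
  !![(-(Complex.I)/4) * ((x 2 : ℝ) + (Real.sqrt 3)/3 * (x 7 : ℝ)),
     (-(Complex.I)/4) * ((x 0 : ℝ) - Complex.I * (x 1 : ℝ)),
     (-(Complex.I)/4) * ((x 3 : ℝ) - Complex.I * (x 4 : ℝ));
     (-(Complex.I)/4) * ((x 0 : ℝ) + Complex.I * (x 1 : ℝ)),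
     (-(Complex.I)/4) * (-(x 2 : ℝ) + (Real.sqrt 3)/3 * (x 7 : ℝ)),
     (-(Complex.I)/4) * ((x 5 : ℝ) - Complex.I * (x 6 : ℝ));
     (-(Complex.I)/4) * ((x 3 : ℝ) + Complex.I * (x 4 : ℝ)),
     (-(Complex.I)/4) * ((x 5 : ℝ) + Complex.I * (x 6 : ℝ)),
     (-(Complex.I)/4) * (-2 * ((Real.sqrt 3)/3) * (x 7 : ℝ))]

/-- Coordinate extraction, inverse to `Fm` on `su 3`. -/
def Gm (X : Matrix (Fin 3) (Fin 3) ℂ) : Fin 8 → ℝ := fun k =>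
  if k = 0 then -4 * (X 0 1).im else if k = 1 then -4 * (X 0 1).re
  else if k = 2 then -2 * ((X 0 0).im - (X 1 1).im) else if k = 3 then -4 * (X 0 2).im
  else if k = 4 then -4 * (X 0 2).re else if k = 5 then -4 * (X 1 2).im
  else if k = 6 then -4 * (X 1 2).re else 2 * Real.sqrt 3 * (X 2 2).im

lemma wedge3_apply (x y z : Fin 8 → ℝ) (i j k : Fin 8) :
    wedge3 i j k ![x, y, z] =
      x i * (y j * z k - y k * z j) - x j * (y i * z k - y k * z i)
        + x k * (y i * z j - y j * z i) := by
  show Matrix.det (Matrix.of fun m => (![x, y, z] m) ∘ ![i, j, k]) = _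
  rw [Matrix.det_fin_three]
  simp [Function.comp]
  ring

lemma rho_apply (x y z : Fin 8 → ℝ) :
    ρ₀ ![x, y, z] = (1/4) * Real.sqrt 3 * (x 3) * (y 4) * (z 7) + (-1/4) * Real.sqrt 3 * (x 3) * (y 7) * (z 4) + (-1/4) * Real.sqrt 3 * (x 4) * (y 3) * (z 7) + (1/4) * Real.sqrt 3 * (x 4) * (y 7) * (z 3) + (1/4) * Real.sqrt 3 * (x 5) * (y 6) * (z 7) + (-1/4) * Real.sqrt 3 * (x 5) * (y 7) * (z 6) + (-1/4) * Real.sqrt 3 * (x 6) * (y 5) * (z 7) + (1/4) * Real.sqrt 3 * (x 6) * (y 7) * (z 5) + (1/4) * Real.sqrt 3 * (x 7) * (y 3) * (z 4) + (-1/4) * Real.sqrt 3 * (x 7) * (y 4) * (z 3) + (1/4) * Real.sqrt 3 * (x 7) * (y 5) * (z 6) + (-1/4) * Real.sqrt 3 * (x 7) * (y 6) * (z 5) + (1/2) * (x 0) * (y 1) * (z 2) + (-1/2) * (x 0) * (y 2) * (z 1) + (1/4) * (x 0) * (y 3) * (z 6) + (-1/4) * (x 0) * (y 4) * (z 5) +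 (1/4) * (x 0) * (y 5) * (z 4) + (-1/4) * (x 0) * (y 6) * (z 3) + (-1/2) * (x 1) * (y 0) * (z 2) + (1/2) * (x 1) * (y 2) * (z 0) + (1/4) * (x 1) * (y 3) * (z 5) + (1/4) * (x 1) * (y 4) * (z 6) + (-1/4) * (x 1) * (y 5) * (z 3) + (-1/4) * (x 1) * (y 6) * (z 4) + (1/2) * (x 2) * (y 0) * (z 1) + (-1/2) * (x 2) * (y 1) * (z 0) + (1/4) * (x 2) * (y 3) * (z 4) + (-1/4) * (x 2) * (y 4) * (z 3) + (-1/4) * (x 2) * (y 5) * (z 6) + (1/4) * (x 2) * (y 6) * (z 5) + (-1/4) * (x 3) * (y 0) * (z 6) + (-1/4) * (x 3) * (y 1) * (z 5) + (-1/4) * (x 3) * (y 2) * (z 4) + (1/4) * (x 3) * (y 4) * (z 2) + (1/4) * (x 3) * (y 5) * (z 1) + (1/4) * (x 3) * (y 6) * (z 0) + (1/4) * (x 4) * (y 0) * (z 5) + (-1/4) * (x 4) * (y 1) * (z 6) + (1/4) * (x 4) * (y 2) * (z 3) + (-1/4) * (x 4) * (y 3) * (z 2) + (-1/4) * (x 4)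 * (y 5) * (z 0) + (1/4) * (x 4) * (y 6) * (z 1) + (-1/4) * (x 5) * (y 0) * (z 4) + (1/4) * (x 5) * (y 1) * (z 3) + (1/4) * (x 5) * (y 2) * (z 6) + (-1/4) * (x 5) * (y 3) * (z 1) + (1/4) * (x 5) * (y 4) * (z 0) + (-1/4) * (x 5) * (y 6) * (z 2) + (1/4) * (x 6) * (y 0) * (z 3) + (1/4) * (x 6) * (y 1) * (z 4) + (-1/4) * (x 6) * (y 2) * (z 5) + (-1/4) * (x 6) * (y 3) * (z 0) + (-1/4) * (x 6) * (y 4) * (z 1) + (1/4) * (x 6) * (y 5) * (z 2) := by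
  simp only [ρ₀, AlternatingMap.add_apply, AlternatingMap.sub_apply, AlternatingMap.smul_apply,
    wedge3_apply, smul_eq_mul]
  ring

lemma br0 (x y : Fin 8 → ℝ) :
    bracketOf ρ₀ x y 0 = (1/2) * (x 1) * (y 2) + (-1/2) * (x 2) * (y 1) + (1/4) * (x 3) * (y 6) + (-1/4) * (x 4) * (y 5) + (1/4) * (x 5) * (y 4) + (-1/4) * (x 6) * (y 3) := by
  show ρ₀ ![x, y, e 0] = _
  rw [rho_apply]
  simp (config := { decide := true }) only [e, if_true, if_false]
  ring

lemma br1 (x y : Fin 8 → ℝ) :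
    bracketOf ρ₀ x y 1 = (-1/2) * (x 0) * (y 2) + (1/2) * (x 2) * (y 0) + (1/4) * (x 3) * (y 5) + (1/4) * (x 4) * (y 6) + (-1/4) * (x 5) * (y 3) + (-1/4) * (x 6) * (y 4) := by
  show ρ₀ ![x, y, e 1] = _
  rw [rho_apply]
  simp (config := { decide := true }) only [e, if_true, if_false]
  ring

lemma br2 (x y : Fin 8 → ℝ) :
    bracketOf ρ₀ x y 2 = (1/2) * (x 0) * (y 1) + (-1/2) * (x 1) * (y 0) + (1/4) * (x 3) * (y 4) + (-1/4) * (x 4) * (y 3) + (-1/4) * (x 5) * (y 6) + (1/4) * (x 6) * (y 5) := by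
  show ρ₀ ![x, y, e 2] = _
  rw [rho_apply]
  simp (config := { decide := true }) only [e, if_true, if_false]
  ring

lemma br3 (x y : Fin 8 → ℝ) :
    bracketOf ρ₀ x y 3 = (1/4) * Real.sqrt 3 * (x 4) * (y 7) + (-1/4) * Real.sqrt 3 * (x 7) * (y 4) + (-1/4) * (x 0) * (y 6) + (-1/4) * (x 1) * (y 5) + (-1/4) * (x 2) * (y 4) + (1/4) * (x 4) * (y 2) + (1/4) * (x 5) * (y 1) + (1/4) * (x 6) * (y 0) := by
  show ρ₀ ![x, y, e 3] = _
  rw [rho_apply]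
  simp (config := { decide := true }) only [e, if_true, if_false]
  ring

lemma br4 (x y : Fin 8 → ℝ) :
    bracketOf ρ₀ x y 4 = (-1/4) * Real.sqrt 3 * (x 3) * (y 7) + (1/4) * Real.sqrt 3 * (x 7) * (y 3) + (1/4) * (x 0) * (y 5) + (-1/4) * (x 1) * (y 6) + (1/4) * (x 2) * (y 3) + (-1/4) * (x 3) * (y 2) + (-1/4) * (x 5) * (y 0) + (1/4) * (x 6) * (y 1) := by
  show ρ₀ ![x, y, e 4] = _
  rw [rho_apply]
  simp (config := { decide := true }) only [e, if_true, if_false]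
  ring

lemma br5 (x y : Fin 8 → ℝ) :
    bracketOf ρ₀ x y 5 = (1/4) * Real.sqrt 3 * (x 6) * (y 7) + (-1/4) * Real.sqrt 3 * (x 7) * (y 6) + (-1/4) * (x 0) * (y 4) + (1/4) * (x 1) * (y 3) + (1/4) * (x 2) * (y 6) + (-1/4) * (x 3) * (y 1) + (1/4) * (x 4) * (y 0) + (-1/4) * (x 6) * (y 2) := by
  show ρ₀ ![x, y, e 5] = _
  rw [rho_apply]
  simp (config := { decide := true }) only [e, if_true, if_false]
  ring

lemma br6 (x y : Fin 8 → ℝ) :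
    bracketOf ρ₀ x y 6 = (-1/4) * Real.sqrt 3 * (x 5) * (y 7) + (1/4) * Real.sqrt 3 * (x 7) * (y 5) + (1/4) * (x 0) * (y 3) + (1/4) * (x 1) * (y 4) + (-1/4) * (x 2) * (y 5) + (-1/4) * (x 3) * (y 0) + (-1/4) * (x 4) * (y 1) + (1/4) * (x 5) * (y 2) := by
  show ρ₀ ![x, y, e 6] = _
  rw [rho_apply]
  simp (config := { decide := true }) only [e, if_true, if_false]
  ring

lemma br7 (x y : Fin 8 → ℝ) :
    bracketOf ρ₀ x y 7 = (1/4) * Real.sqrt 3 * (x 3) * (y 4) + (-1/4) * Real.sqrt 3 * (x 4) * (y 3) + (1/4) * Real.sqrt 3 * (x 5) * (y 6) + (-1/4) * Real.sqrt 3 * (x 6) * (y 5) := by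
  show ρ₀ ![x, y, e 7] = _
  rw [rho_apply]
  simp (config := { decide := true }) only [e, if_true, if_false]
  ring

lemma Fm_bracket (x y : Fin 8 → ℝ) :
    Fm (bracketOf ρ₀ x y) = Fm x * Fm y - Fm y * Fm x := by
  have hs : ((Real.sqrt 3 : ℝ) : ℂ) ^ 2 = 3 := by
    norm_cast
    rw [Real.sq_sqrt] <;> norm_num
  have hI : (Complex.I) ^ 2 = -1 := Complex.I_sq
  ext i j
  fin_cases i <;> fin_cases j
  · simp [Fm, br0, br1, br2, br3, br4, br5, br6, br7, Matrix.sub_apply,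
      Matrix.mul_apply, Fin.sum_univ_three]
    linear_combination (norm := (push_cast; ring_nf)) ((-1/8) * Complex.I * (((x 0) : ℝ) : ℂ) * (((y 1) : ℝ) : ℂ) + (1/8) * Complex.I * (((x 1) : ℝ) : ℂ) * (((y 0) : ℝ) : ℂ) + (-1/8) * Complex.I * (((x 3) : ℝ) : ℂ) * (((y 4) : ℝ) : ℂ) + (1/8) * Complex.I * (((x 4) : ℝ) : ℂ) * (((y 3) : ℝ) : ℂ)) * hI + ((-1/48) * Complex.I * (((x 3) : ℝ) : ℂ) * (((y 4) : ℝ) : ℂ) + (1/48) * Complex.I * (((x 4) : ℝ) : ℂ) * (((y 3) : ℝ) : ℂ) + (-1/48) * Complex.I * (((x 5) : ℝ) : ℂ) * (((y 6) : ℝ) : ℂ) + (1/48) * Complex.I * (((x 6) : ℝ) : ℂ) * (((y 5) : ℝ) : ℂ)) * hs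
  · simp [Fm, br0, br1, br2, br3, br4, br5, br6, br7, Matrix.sub_apply,
      Matrix.mul_apply, Fin.sum_univ_three]
    linear_combination (norm := (push_cast; ring_nf)) ((-1/8) * Complex.I * (((x 1) : ℝ) : ℂ) * (((y 2) : ℝ) : ℂ) + (1/8) * Complex.I * (((x 2) : ℝ) : ℂ) * (((y 1) : ℝ) : ℂ) + (-1/16) * Complex.I * (((x 3) : ℝ) : ℂ) * (((y 6) : ℝ) : ℂ) + (1/16) * Complex.I * (((x 4) : ℝ) : ℂ) * (((y 5) : ℝ) : ℂ) + (-1/16) * Complex.I * (((x 5) : ℝ) : ℂ) * (((y 4) : ℝ) : ℂ) + (1/16) * Complex.I * (((x 6) : ℝ) : ℂ) * (((y 3) : ℝ) : ℂ) + (1/16) * Complex.I * Complex.I * (((x 4) : ℝ) : ℂ) * (((y 6) : ℝ) : ℂ) + (-1/16) * Complex.I * Complex.I * (((x 6) : ℝ) : ℂ) * (((y 4) : ℝ) : ℂ)) * hI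
  · simp [Fm, br0, br1, br2, br3, br4, br5, br6, br7, Matrix.sub_apply,
      Matrix.mul_apply, Fin.sum_univ_three]
    linear_combination (norm := (push_cast; ring_nf)) ((-1/16) * Complex.I * (Real.sqrt 3 : ℂ) * (((x 4) : ℝ) : ℂ) * (((y 7) : ℝ) : ℂ) + (1/16) * Complex.I * (Real.sqrt 3 : ℂ) * (((x 7) : ℝ) : ℂ) * (((y 4) : ℝ) : ℂ) + (1/16) * Complex.I * (((x 0) : ℝ) : ℂ) * (((y 6) : ℝ) : ℂ) + (1/16) * Complex.I * (((x 1) : ℝ) : ℂ) * (((y 5) : ℝ) : ℂ) + (1/16) * Complex.I * (((x 2) : ℝ) : ℂ) * (((y 4) : ℝ) : ℂ) + (-1/16) * Complex.I * (((x 4) : ℝ) : ℂ) * (((y 2) : ℝ) : ℂ) + (-1/16) * Complex.I * (((x 5) : ℝ) : ℂ) * (((y 1) : ℝ) : ℂ) + (-1/16) * Complex.I * (((x 6) : ℝ) : ℂ) * (((y 0) : ℝ) : ℂ) + (-1/16) * Complex.I * Complex.I * (((x 1) : ℝ) : ℂ) * (((y 6) : ℝ) : ℂ) + (1/16) * Complex.I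 * Complex.I * (((x 6) : ℝ) : ℂ) * (((y 1) : ℝ) : ℂ)) * hI
  · simp [Fm, br0, br1, br2, br3, br4, br5, br6, br7, Matrix.sub_apply,
      Matrix.mul_apply, Fin.sum_univ_three]
    linear_combination (norm := (push_cast; ring_nf)) ((-1/8) * Complex.I * (((x 1) : ℝ) : ℂ) * (((y 2) : ℝ) : ℂ) + (1/8) * Complex.I * (((x 2) : ℝ) : ℂ) * (((y 1) : ℝ) : ℂ) + (-1/16) * Complex.I * (((x 3) : ℝ) : ℂ) * (((y 6) : ℝ) : ℂ) + (1/16) * Complex.I * (((x 4) : ℝ) : ℂ) * (((y 5) : ℝ) : ℂ) + (-1/16) * Complex.I * (((x 5) : ℝ) : ℂ) * (((y 4) : ℝ) : ℂ) + (1/16) * Complex.I * (((x 6) : ℝ) : ℂ) * (((y 3) : ℝ) : ℂ) + (-1/16) * Complex.I * Complex.I * (((x 4) : ℝ) : ℂ) * (((y 6) : ℝ) : ℂ) + (1/16) * Complex.I * Complex.I * (((x 6) : ℝ) : ℂ) * (((y 4) : ℝ) : ℂ)) * hI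
  · simp [Fm, br0, br1, br2, br3, br4, br5, br6, br7, Matrix.sub_apply,
      Matrix.mul_apply, Fin.sum_univ_three]
    linear_combination (norm := (push_cast; ring_nf)) ((1/8) * Complex.I * (((x 0) : ℝ) : ℂ) * (((y 1) : ℝ) : ℂ) + (-1/8) * Complex.I * (((x 1) : ℝ) : ℂ) * (((y 0) : ℝ) : ℂ) + (-1/8) * Complex.I * (((x 5) : ℝ) : ℂ) * (((y 6) : ℝ) : ℂ) + (1/8) * Complex.I * (((x 6) : ℝ) : ℂ) * (((y 5) : ℝ) : ℂ)) * hI + ((-1/48) * Complex.I * (((x 3) : ℝ) : ℂ) * (((y 4) : ℝ) : ℂ) + (1/48) * Complex.I * (((x 4) : ℝ) : ℂ) * (((y 3) : ℝ) : ℂ) + (-1/48) * Complex.I * (((x 5) : ℝ) : ℂ) * (((y 6) : ℝ) : ℂ) + (1/48) * Complex.I * (((x 6) : ℝ) : ℂ) * (((y 5) : ℝ) : ℂ)) * hs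
  · simp [Fm, br0, br1, br2, br3, br4, br5, br6, br7, Matrix.sub_apply,
      Matrix.mul_apply, Fin.sum_univ_three]
    linear_combination (norm := (push_cast; ring_nf)) ((-1/16) * Complex.I * (Real.sqrt 3 : ℂ) * (((x 6) : ℝ) : ℂ) * (((y 7) : ℝ) : ℂ) + (1/16) * Complex.I * (Real.sqrt 3 : ℂ) * (((x 7) : ℝ) : ℂ) * (((y 6) : ℝ) : ℂ) + (1/16) * Complex.I * (((x 0) : ℝ) : ℂ) * (((y 4) : ℝ) : ℂ) + (-1/16) * Complex.I * (((x 1) : ℝ) : ℂ) * (((y 3) : ℝ) : ℂ) + (-1/16) * Complex.I * (((x 2) : ℝ) : ℂ) * (((y 6) : ℝ) : ℂ) + (1/16) * Complex.I * (((x 3) : ℝ) : ℂ) * (((y 1) : ℝ) : ℂ) + (-1/16) * Complex.I * (((x 4) : ℝ) : ℂ) * (((y 0) : ℝ) : ℂ) + (1/16) * Complex.I * (((x 6) : ℝ) : ℂ) * (((y 2) : ℝ) : ℂ) + (1/16) * Complex.I * Complex.I * (((x 1) : ℝ) : ℂ) * (((y 4) : ℝ) : ℂ) + (-1/16) * Complex.I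 * Complex.I * (((x 4) : ℝ) : ℂ) * (((y 1) : ℝ) : ℂ)) * hI
  · simp [Fm, br0, br1, br2, br3, br4, br5, br6, br7, Matrix.sub_apply,
      Matrix.mul_apply, Fin.sum_univ_three]
    linear_combination (norm := (push_cast; ring_nf)) ((-1/16) * Complex.I * (Real.sqrt 3 : ℂ) * (((x 4) : ℝ) : ℂ) * (((y 7) : ℝ) : ℂ) + (1/16) * Complex.I * (Real.sqrt 3 : ℂ) * (((x 7) : ℝ) : ℂ) * (((y 4) : ℝ) : ℂ) + (1/16) * Complex.I * (((x 0) : ℝ) : ℂ) * (((y 6) : ℝ) : ℂ) + (1/16) * Complex.I * (((x 1) : ℝ) : ℂ) * (((y 5) : ℝ) : ℂ) + (1/16) * Complex.I * (((x 2) : ℝ) : ℂ) * (((y 4) : ℝ) : ℂ) + (-1/16) * Complex.I * (((x 4) : ℝ) : ℂ) * (((y 2) : ℝ) : ℂ) + (-1/16) * Complex.I * (((x 5) : ℝ) : ℂ) * (((y 1) : ℝ) : ℂ) + (-1/16) * Complex.I * (((x 6) : ℝ) : ℂ) * (((y 0) : ℝ) : ℂ) + (1/16) * Complex.I * Complex.I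 * (((x 1) : ℝ) : ℂ) * (((y 6) : ℝ) : ℂ) + (-1/16) * Complex.I * Complex.I * (((x 6) : ℝ) : ℂ) * (((y 1) : ℝ) : ℂ)) * hI
  · simp [Fm, br0, br1, br2, br3, br4, br5, br6, br7, Matrix.sub_apply,
      Matrix.mul_apply, Fin.sum_univ_three]
    linear_combination (norm := (push_cast; ring_nf)) ((-1/16) * Complex.I * (Real.sqrt 3 : ℂ) * (((x 6) : ℝ) : ℂ) * (((y 7) : ℝ) : ℂ) + (1/16) * Complex.I * (Real.sqrt 3 : ℂ) * (((x 7) : ℝ) : ℂ) * (((y 6) : ℝ) : ℂ) + (1/16) * Complex.I * (((x 0) : ℝ) : ℂ) * (((y 4) : ℝ) : ℂ) + (-1/16) * Complex.I * (((x 1) : ℝ) : ℂ) * (((y 3) : ℝ) : ℂ) + (-1/16) * Complex.I * (((x 2) : ℝ) : ℂ) * (((y 6) : ℝ) : ℂ) + (1/16) * Complex.I * (((x 3) : ℝ) : ℂ) * (((y 1) : ℝ) : ℂ) + (-1/16) * Complex.I * (((x 4) : ℝ) : ℂ) * (((y 0) : ℝ) : ℂ) + (1/16) * Complex.I * (((x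 6) : ℝ) : ℂ) * (((y 2) : ℝ) : ℂ) + (-1/16) * Complex.I * Complex.I * (((x 1) : ℝ) : ℂ) * (((y 4) : ℝ) : ℂ) + (1/16) * Complex.I * Complex.I * (((x 4) : ℝ) : ℂ) * (((y 1) : ℝ) : ℂ)) * hI
  · simp [Fm, br0, br1, br2, br3, br4, br5, br6, br7, Matrix.sub_apply,
      Matrix.mul_apply, Fin.sum_univ_three]
    linear_combination (norm := (push_cast; ring_nf)) ((1/8) * Complex.I * (((x 3) : ℝ) : ℂ) * (((y 4) : ℝ) : ℂ) + (-1/8) * Complex.I * (((x 4) : ℝ) : ℂ) * (((y 3) : ℝ) : ℂ) + (1/8) * Complex.I * (((x 5) : ℝ) : ℂ) * (((y 6) : ℝ) : ℂ) + (-1/8) * Complex.I * (((x 6) : ℝ) : ℂ) * (((y 5) : ℝ) : ℂ)) * hI + ((1/24) * Complex.I * (((x 3) : ℝ) : ℂ) * (((y 4) : ℝ) : ℂ) + (-1/24) * Complex.I * (((x 4) : ℝ) : ℂ) * (((y 3) : ℝ) : ℂ) + (1/24) * Complex.I * (((x 5) : ℝ) : ℂ) * (((y 6) : ℝ) : ℂ)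 + (-1/24) * Complex.I * (((x 6) : ℝ) : ℂ) * (((y 5) : ℝ) : ℂ)) * hs
lemma Fm_add (x y : Fin 8 → ℝ) : Fm (x + y) = Fm x + Fm y := by
  ext i j
  fin_cases i <;> fin_cases j <;>
    simp [Fm, Pi.add_apply] <;> push_cast <;> ring

lemma Fm_smul (c : ℝ) (x : Fin 8 → ℝ) : Fm (c • x) = (c : ℂ) • Fm x := by
  ext i j
  fin_cases i <;> fin_cases j <;>
    simp [Fm, Pi.smul_apply, Complex.real_smul] <;> push_cast <;> ring

lemma Fm_mem (x : Fin 8 → ℝ) : Fm x ∈ su 3 := by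
  constructor
  · ext i j
    fin_cases i <;> fin_cases j <;>
      simp [Fm, Matrix.conjTranspose_apply, Complex.ext_iff] <;> (try ring_nf) <;> simp
  · rw [Matrix.trace_fin_three]
    simp [Fm]
    ring

lemma GF (x : Fin 8 → ℝ) : Gm (Fm x) = x := by
  have hs : Real.sqrt 3 * Real.sqrt 3 = 3 := Real.mul_self_sqrt (by norm_num)
  funext k
  fin_cases k <;>
    simp (config := { decide := true }) [Gm, Fm, Complex.add_im, Complex.add_re, Complex.mul_re,
      Complex.mul_im] <;>
    ring_nf <;>
    linear_combination (x 7 / 3) * hs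

lemma Gm_zero : Gm 0 = 0 := by
  funext k
  fin_cases k <;> simp (config := { decide := true }) [Gm]

lemma FG (X : Matrix (Fin 3) (Fin 3) ℂ) (hX : X ∈ su 3) : Fm (Gm X) = X := by
  obtain ⟨h1, h2⟩ := hX
  have hs : Real.sqrt 3 * Real.sqrt 3 = 3 := Real.mul_self_sqrt (by norm_num)
  have key : ∀ i j, (starRingEnd ℂ) (X j i) = -(X i j) := fun i j => by
    have := congr_fun (congr_fun h1 i) j
    simpa [Matrix.conjTranspose_apply] using this
  have hre : ∀ i j, (X j i).re = -(X i j).re := fun i j => by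
    have := congr_arg Complex.re (key i j)
    simpa using this
  have him : ∀ i j, (X j i).im = (X i j).im := fun i j => by
    have := congr_arg Complex.im (key i j)
    simpa using this
  rw [Matrix.trace_fin_three] at h2
  have htr : (X 0 0).im + (X 1 1).im + (X 2 2).im = 0 := by
    have := congr_arg Complex.im h2
    simpa using this
  have hd0 : (X 0 0).re = 0 := by have := hre 0 0; linarith
  have hd1 : (X 1 1).re = 0 := by have := hre 1 1; linarith
  have hd2 : (X 2 2).re = 0 := by have := hre 2 2; linarith
  ext i j
  fin_cases i <;> fin_cases j <;>
    · apply Complex.ext <;>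
        simp (config := { decide := true }) [Fm, Gm, Complex.add_im, Complex.add_re,
          Complex.mul_re, Complex.mul_im] <;>
      first
        | linarith [hre 0 1, him 0 1, hre 0 2, him 0 2, hre 1 2, him 1 2, hd0, hd1, hd2]
        | linear_combination ((X 2 2).im / 3) * hs
        | linear_combination (-((X 2 2).im) / 6) * hs - (1/2) * htr
        | linarith [htr]

/-- The linear equivalence. -/
def f8 : (Fin 8 → ℝ) ≃ₗ[ℝ] su 3 where
  toFun x := ⟨Fm x, Fm_mem x⟩
  map_add' x y := Subtype.ext (Fm_add x y)
  map_smul' c x := Subtype.ext (by simpa using Fm_smul c x)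
  invFun X := Gm X.1
  left_inv x := GF x
  right_inv X := Subtype.ext (FG X.1 X.2)

lemma f8_bracket (x y : Fin 8 → ℝ) : f8 (bracketOf ρ₀ x y) = ⁅f8 x, f8 y⁆ := by
  apply Subtype.ext
  have : (↑(⁅f8 x, f8 y⁆ : su 3) : Matrix (Fin 3) (Fin 3) ℂ) = Fm x * Fm y - Fm y * Fm x := by
    rw [LieSubalgebra.coe_bracket]
    rfl
  rw [this]
  exact Fm_bracket x y

end PSU3Aux

/-- The bracket induced by the PSU(3)-form `ρ₀` on Euclidean ℝ⁸ satisfies the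
Jacobi identity, and the resulting Lie algebra `(ℝ⁸, [·,·]_{ρ₀})` is isomorphic as a real Lie
algebra to `su(3)`. -/
theorem psu3_form_bracket_jacobi_and_iso_su3 :
    (∀ x y z : Fin 8 → ℝ,
      bracketOf ρ₀ (bracketOf ρ₀ x y) z + bracketOf ρ₀ (bracketOf ρ₀ y z) x
        + bracketOf ρ₀ (bracketOf ρ₀ z x) y = 0)
    ∧ ∃ f : (Fin 8 → ℝ) ≃ₗ[ℝ] su 3, ∀ x y : Fin 8 → ℝ,
        f (bracketOf ρ₀ x y) = ⁅f x, f y⁆ := by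
  constructor
  · intro x y z
    have h := PSU3Aux.GF (bracketOf ρ₀ (bracketOf ρ₀ x y) z + bracketOf ρ₀ (bracketOf ρ₀ y z) x
      + bracketOf ρ₀ (bracketOf ρ₀ z x) y)
    rw [show PSU3Aux.Fm (bracketOf ρ₀ (bracketOf ρ₀ x y) z + bracketOf ρ₀ (bracketOf ρ₀ y z) x
        + bracketOf ρ₀ (bracketOf ρ₀ z x) y) = 0 from ?_, PSU3Aux.Gm_zero] at h
    · exact h.symm
    · rw [PSU3Aux.Fm_add, PSU3Aux.Fm_add, PSU3Aux.Fm_bracket, PSU3Aux.Fm_bracket,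
        PSU3Aux.Fm_bracket, PSU3Aux.Fm_bracket, PSU3Aux.Fm_bracket, PSU3Aux.Fm_bracket]
      noncomm_ring
  · exact ⟨PSU3Aux.f8, PSU3Aux.f8_bracket⟩
end
end

section
/- For real numbers a ≥ b ≥ 0 with a² + b² = 1 and a > 0, the 3-form ρ = a·e^{123} + b·e^{456} on Euclidean ℝ⁸ has induced bracket [·,·]_ρ satisfying the Jacobi identity, so (ℝ⁸, [·,·]_ρ, ⟨·,·⟩) is an adapted Lie algebra; moreover this Lie algebra is isomorphic to su(2) ⊕ su(2) ⊕ ℝ² if b > 0, and to su(2) ⊕ ℝ⁵ if b = 0. -/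
noncomputable section

open Matrix

attribute [local instance 100] LieRing.ofAssociativeRing

section vec8
variable {α : Type*} (a0 a1 a2 a3 a4 a5 a6 a7 : α)
@[simp] lemma vec8_0 : ![a0,a1,a2,a3,a4,a5,a6,a7] (0 : Fin 8) = a0 := rfl
@[simp] lemma vec8_1 : ![a0,a1,a2,a3,a4,a5,a6,a7] (1 : Fin 8) = a1 := rfl
@[simp] lemma vec8_2 : ![a0,a1,a2,a3,a4,a5,a6,a7] (2 : Fin 8) = a2 := rfl
@[simp] lemma vec8_3 : ![a0,a1,a2,a3,a4,a5,a6,a7] (3 : Fin 8) = a3 := rfl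
@[simp] lemma vec8_4 : ![a0,a1,a2,a3,a4,a5,a6,a7] (4 : Fin 8) = a4 := rfl
@[simp] lemma vec8_5 : ![a0,a1,a2,a3,a4,a5,a6,a7] (5 : Fin 8) = a5 := rfl
@[simp] lemma vec8_6 : ![a0,a1,a2,a3,a4,a5,a6,a7] (6 : Fin 8) = a6 := rfl
@[simp] lemma vec8_7 : ![a0,a1,a2,a3,a4,a5,a6,a7] (7 : Fin 8) = a7 := rfl
end vec8

lemma wedge3_apply (i j k : Fin 8) (x y z : Fin 8 → ℝ) :
    wedge3 i j k ![x, y, z] =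
      x i * (y j * z k - y k * z j) - x j * (y i * z k - y k * z i)
        + x k * (y i * z j - y j * z i) := by
  simp only [wedge3, AlternatingMap.compLinearMap_apply]
  rw [show ∀ v : Fin 3 → Fin 3 → ℝ, Matrix.detRowAlternating v = Matrix.det (Matrix.of v)
    from fun _ => rfl]
  simp [Matrix.det_fin_three, LinearMap.funLeft]
  ring

lemma brk (a b : ℝ) (x y : Fin 8 → ℝ) :
    bracketOf (a • wedge3 0 1 2 + b • wedge3 3 4 5) x y =
      ![a*(x 1*y 2 - x 2*y 1), a*(x 2*y 0 - x 0*y 2), a*(x 0*y 1 - x 1*y 0),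
        b*(x 4*y 5 - x 5*y 4), b*(x 5*y 3 - x 3*y 5), b*(x 3*y 4 - x 4*y 3), 0, 0] := by
  funext k
  fin_cases k <;>
    simp [bracketOf, wedge3_apply, e, -mul_eq_mul_left_iff] <;> ring

lemma jacobi (a b : ℝ) (x y z : Fin 8 → ℝ) :
    bracketOf (a • wedge3 0 1 2 + b • wedge3 3 4 5)
        (bracketOf (a • wedge3 0 1 2 + b • wedge3 3 4 5) x y) z
      + bracketOf (a • wedge3 0 1 2 + b • wedge3 3 4 5)
          (bracketOf (a • wedge3 0 1 2 + b • wedge3 3 4 5) y z) x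
      + bracketOf (a • wedge3 0 1 2 + b • wedge3 3 4 5)
          (bracketOf (a • wedge3 0 1 2 + b • wedge3 3 4 5) z x) y = 0 := by
  simp only [brk]
  funext k
  fin_cases k <;> simp <;> ring

lemma skew (a b : ℝ) (x y z : Fin 8 → ℝ) :
    dot (bracketOf (a • wedge3 0 1 2 + b • wedge3 3 4 5) x y) z
      = - dot y (bracketOf (a • wedge3 0 1 2 + b • wedge3 3 4 5) x z) := by
  simp only [brk, dot, Fin.sum_univ_eight]
  simp
  ring

def m (t u v : ℝ) : Matrix (Fin 2) (Fin 2) ℂ :=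
  !![Complex.I * v, u + Complex.I * t; -u + Complex.I * t, -(Complex.I * v)]

lemma m_mem (t u v : ℝ) : m t u v ∈ su 2 := by
  constructor
  · ext i j
    fin_cases i <;> fin_cases j <;>
      simp [m, Matrix.conjTranspose_apply, Complex.ext_iff] <;> ring
  · simp [m, Matrix.trace_fin_two]

def mk2 (t u v : ℝ) : su 2 := ⟨m t u v, m_mem t u v⟩

lemma mk2_add (t u v t' u' v' : ℝ) :
    mk2 t u v + mk2 t' u' v' = mk2 (t + t') (u + u') (v + v') := by
  apply Subtype.ext
  show m t u v + m t' u' v' = m (t + t') (u + u') (v + v')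
  ext i j
  fin_cases i <;> fin_cases j <;> simp [m, Complex.ext_iff] <;> ring

lemma mk2_smul (c t u v : ℝ) : c • mk2 t u v = mk2 (c * t) (c * u) (c * v) := by
  apply Subtype.ext
  show c • m t u v = m (c * t) (c * u) (c * v)
  ext i j
  fin_cases i <;> fin_cases j <;> simp [m, Complex.ext_iff] <;> ring

lemma mk2_bracket (t u v t' u' v' : ℝ) :
    ⁅mk2 t u v, mk2 t' u' v'⁆ =
      mk2 (-2*(u*v' - v*u')) (-2*(v*t' - t*v')) (-2*(t*u' - u*t')) := by
  apply Subtype.ext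
  show ⁅m t u v, m t' u' v'⁆ = m _ _ _
  rw [Ring.lie_def]
  ext i j
  fin_cases i <;> fin_cases j <;>
    simp [m, Matrix.mul_apply, Fin.sum_univ_two, Complex.ext_iff] <;>
    constructor <;> first | trivial | ring

lemma mk2_eta (X : su 2) :
    mk2 ((X : Matrix (Fin 2) (Fin 2) ℂ) 0 1).im ((X : Matrix (Fin 2) (Fin 2) ℂ) 0 1).re
      ((X : Matrix (Fin 2) (Fin 2) ℂ) 0 0).im = X := by
  obtain ⟨X, hH, hT⟩ := X
  apply Subtype.ext
  have h00 : (starRingEnd ℂ) (X 0 0) = -X 0 0 := by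
    have := congrFun (congrFun hH 0) 0; simpa [Matrix.conjTranspose_apply] using this
  have h10 : (starRingEnd ℂ) (X 0 1) = -X 1 0 := by
    have := congrFun (congrFun hH 1) 0; simpa [Matrix.conjTranspose_apply] using this
  have h11 : X 1 1 = -X 0 0 := by
    have := hT; rw [Matrix.trace_fin_two] at this; linear_combination this - X 0 0
  have hre : (X 0 0).re = 0 := by
    have := congrArg Complex.re h00; simp at this; linarith
  have hr : (X 1 0).re = -(X 0 1).re := by
    have := congrArg Complex.re h10; simp at this; linarith
  have hi : (X 1 0).im = (X 0 1).im := by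
    have := congrArg Complex.im h10; simp at this; linarith
  show m _ _ _ = X
  ext i j
  fin_cases i <;> fin_cases j <;>
    simp [m, Complex.ext_iff, h11, hre, hr, hi]

set_option maxHeartbeats 1000000 in
def Φ (a b : ℝ) (ha : a ≠ 0) (hb : b ≠ 0) :
    (Fin 8 → ℝ) ≃ₗ[ℝ] su 2 × su 2 × (Fin 2 → ℝ) where
  toFun x := (mk2 (-(a/2) * x 0) (-(a/2) * x 1) (-(a/2) * x 2),
              mk2 (-(b/2) * x 3) (-(b/2) * x 4) (-(b/2) * x 5), ![x 6, x 7])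
  map_add' x y := by
    refine Prod.ext ?_ (Prod.ext ?_ ?_)
    · rw [Prod.fst_add, mk2_add]; simp only [Pi.add_apply]; congr 1 <;> ring
    · show _ = _ + _
      rw [mk2_add]; simp only [Pi.add_apply]; congr 1 <;> ring
    · funext i; fin_cases i <;> simp
  map_smul' c x := by
    refine Prod.ext ?_ (Prod.ext ?_ ?_)
    · show _ = c • _
      rw [mk2_smul]; simp only [Pi.smul_apply, smul_eq_mul]; congr 1 <;> ring
    · show _ = c • _
      rw [mk2_smul]; simp only [Pi.smul_apply, smul_eq_mul]; congr 1 <;> ring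
    · funext i; fin_cases i <;> simp
  invFun p :=
    ![-(2/a) * ((p.1 : Matrix (Fin 2) (Fin 2) ℂ) 0 1).im,
      -(2/a) * ((p.1 : Matrix (Fin 2) (Fin 2) ℂ) 0 1).re,
      -(2/a) * ((p.1 : Matrix (Fin 2) (Fin 2) ℂ) 0 0).im,
      -(2/b) * ((p.2.1 : Matrix (Fin 2) (Fin 2) ℂ) 0 1).im,
      -(2/b) * ((p.2.1 : Matrix (Fin 2) (Fin 2) ℂ) 0 1).re,
      -(2/b) * ((p.2.1 : Matrix (Fin 2) (Fin 2) ℂ) 0 0).im,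
      p.2.2 0, p.2.2 1]
  left_inv x := by
    funext k
    fin_cases k <;> simp [mk2, m] <;> field_simp <;> ring
  right_inv p := by
    obtain ⟨X, Y, w⟩ := p
    have hA : ∀ r : ℝ, -(a/2) * (-(2/a) * r) = r := fun r => by field_simp
    have hB : ∀ r : ℝ, -(b/2) * (-(2/b) * r) = r := fun r => by field_simp
    refine Prod.ext ?_ (Prod.ext ?_ ?_)
    · simp only [vec8_0, vec8_1, vec8_2, hA]
      exact mk2_eta X
    · simp only [vec8_3, vec8_4, vec8_5, hB]
      exact mk2_eta Y
    · funext i; fin_cases i <;> rfl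

lemma mk2_congr {t u v t' u' v' : ℝ} (h1 : t = t') (h2 : u = u') (h3 : v = v') :
    mk2 t u v = mk2 t' u' v' := by rw [h1, h2, h3]

lemma Φ_apply (a b : ℝ) (ha : a ≠ 0) (hb : b ≠ 0) (x : Fin 8 → ℝ) :
    Φ a b ha hb x = (mk2 (-(a/2) * x 0) (-(a/2) * x 1) (-(a/2) * x 2),
      mk2 (-(b/2) * x 3) (-(b/2) * x 4) (-(b/2) * x 5), ![x 6, x 7]) := rfl

lemma Φ_bracket (a b : ℝ) (ha : a ≠ 0) (hb : b ≠ 0) (x y : Fin 8 → ℝ) :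
    Φ a b ha hb (bracketOf (a • wedge3 0 1 2 + b • wedge3 3 4 5) x y)
      = (⁅(Φ a b ha hb x).1, (Φ a b ha hb y).1⁆,
         ⁅(Φ a b ha hb x).2.1, (Φ a b ha hb y).2.1⁆, 0) := by
  rw [brk]
  simp only [Φ_apply, vec8_0, vec8_1, vec8_2, vec8_3, vec8_4, vec8_5, vec8_6, vec8_7]
  refine Prod.ext ?_ (Prod.ext ?_ ?_) <;> dsimp only
  · rw [mk2_bracket]; exact mk2_congr (by ring) (by ring) (by ring)
  · rw [mk2_bracket]; exact mk2_congr (by ring) (by ring) (by ring)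
  · funext i; fin_cases i <;> rfl

section vec5
variable {α : Type*} (a0 a1 a2 a3 a4 : α)
@[simp] lemma vec5_0 : ![a0,a1,a2,a3,a4] (0 : Fin 5) = a0 := rfl
@[simp] lemma vec5_1 : ![a0,a1,a2,a3,a4] (1 : Fin 5) = a1 := rfl
@[simp] lemma vec5_2 : ![a0,a1,a2,a3,a4] (2 : Fin 5) = a2 := rfl
@[simp] lemma vec5_3 : ![a0,a1,a2,a3,a4] (3 : Fin 5) = a3 := rfl
@[simp] lemma vec5_4 : ![a0,a1,a2,a3,a4] (4 : Fin 5) = a4 := rfl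
end vec5

set_option maxHeartbeats 1000000 in
def Ψ (a : ℝ) (ha : a ≠ 0) : (Fin 8 → ℝ) ≃ₗ[ℝ] su 2 × (Fin 5 → ℝ) where
  toFun x := (mk2 (-(a/2) * x 0) (-(a/2) * x 1) (-(a/2) * x 2),
              ![x 3, x 4, x 5, x 6, x 7])
  map_add' x y := by
    refine Prod.ext ?_ ?_
    · rw [Prod.fst_add, mk2_add]; simp only [Pi.add_apply]
      exact mk2_congr (by ring) (by ring) (by ring)
    · funext i; fin_cases i <;> simp
  map_smul' c x := by
    refine Prod.ext ?_ ?_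
    · show _ = c • _
      rw [mk2_smul]; simp only [Pi.smul_apply, smul_eq_mul]
      exact mk2_congr (by ring) (by ring) (by ring)
    · funext i; fin_cases i <;> simp
  invFun p :=
    ![-(2/a) * ((p.1 : Matrix (Fin 2) (Fin 2) ℂ) 0 1).im,
      -(2/a) * ((p.1 : Matrix (Fin 2) (Fin 2) ℂ) 0 1).re,
      -(2/a) * ((p.1 : Matrix (Fin 2) (Fin 2) ℂ) 0 0).im,
      p.2 0, p.2 1, p.2 2, p.2 3, p.2 4]
  left_inv x := by
    funext k
    fin_cases k <;> simp [mk2, m] <;> field_simp <;> ring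
  right_inv p := by
    obtain ⟨X, w⟩ := p
    have hA : ∀ r : ℝ, -(a/2) * (-(2/a) * r) = r := fun r => by field_simp
    refine Prod.ext ?_ ?_
    · simp only [vec8_0, vec8_1, vec8_2, hA]
      exact mk2_eta X
    · funext i; fin_cases i <;> rfl

lemma Ψ_apply (a : ℝ) (ha : a ≠ 0) (x : Fin 8 → ℝ) :
    Ψ a ha x = (mk2 (-(a/2) * x 0) (-(a/2) * x 1) (-(a/2) * x 2),
      ![x 3, x 4, x 5, x 6, x 7]) := rfl

lemma Ψ_bracket (a : ℝ) (ha : a ≠ 0) (x y : Fin 8 → ℝ) :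
    Ψ a ha (bracketOf (a • wedge3 0 1 2 + (0:ℝ) • wedge3 3 4 5) x y)
      = (⁅(Ψ a ha x).1, (Ψ a ha y).1⁆, 0) := by
  rw [brk]
  simp only [Ψ_apply, vec8_0, vec8_1, vec8_2, vec8_3, vec8_4, vec8_5, vec8_6, vec8_7]
  refine Prod.ext ?_ ?_ <;> dsimp only
  · rw [mk2_bracket]; exact mk2_congr (by ring) (by ring) (by ring)
  · funext i; fin_cases i <;> simp

/-- For real numbers `a ≥ b ≥ 0` with `a² + b² = 1` and `a > 0`, the 3-form
`ρ = a·e^{123} + b·e^{456}` on Euclidean ℝ⁸ has induced bracket satisfying the Jacobi identity,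
so `(ℝ⁸, [·,·]_ρ, ⟨·,·⟩)` is an adapted Lie algebra; moreover this Lie algebra is isomorphic to
`su(2) ⊕ su(2) ⊕ ℝ²` if `b > 0`, and to `su(2) ⊕ ℝ⁵` if `b = 0` (the abelian factors `ℝᵖ`
carrying the zero bracket). -/
theorem two_summand_form_bracket_jacobi_adapted_and_iso
    (a b : ℝ) (hab : b ≤ a) (hb : 0 ≤ b) (hunit : a ^ 2 + b ^ 2 = 1) (ha : 0 < a) :
    (∀ x y z : Fin 8 → ℝ,
      bracketOf (a • wedge3 0 1 2 + b • wedge3 3 4 5)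
          (bracketOf (a • wedge3 0 1 2 + b • wedge3 3 4 5) x y) z
        + bracketOf (a • wedge3 0 1 2 + b • wedge3 3 4 5)
            (bracketOf (a • wedge3 0 1 2 + b • wedge3 3 4 5) y z) x
        + bracketOf (a • wedge3 0 1 2 + b • wedge3 3 4 5)
            (bracketOf (a • wedge3 0 1 2 + b • wedge3 3 4 5) z x) y = 0)
    ∧ (∀ x y z : Fin 8 → ℝ,
        dot (bracketOf (a • wedge3 0 1 2 + b • wedge3 3 4 5) x y) z
          = - dot y (bracketOf (a • wedge3 0 1 2 + b • wedge3 3 4 5) x z))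
    ∧ (0 < b → ∃ f : (Fin 8 → ℝ) ≃ₗ[ℝ] (su 2 × su 2 × (Fin 2 → ℝ)), ∀ x y : Fin 8 → ℝ,
        f (bracketOf (a • wedge3 0 1 2 + b • wedge3 3 4 5) x y)
          = (⁅(f x).1, (f y).1⁆, ⁅(f x).2.1, (f y).2.1⁆, 0))
    ∧ (b = 0 → ∃ f : (Fin 8 → ℝ) ≃ₗ[ℝ] (su 2 × (Fin 5 → ℝ)), ∀ x y : Fin 8 → ℝ,
        f (bracketOf (a • wedge3 0 1 2 + b • wedge3 3 4 5) x y)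
          = (⁅(f x).1, (f y).1⁆, 0)) := by
  refine ⟨jacobi a b, skew a b, ?_, ?_⟩
  · intro hbpos
    exact ⟨Φ a b (ne_of_gt ha) (ne_of_gt hbpos), Φ_bracket a b _ _⟩
  · intro hb0
    subst hb0
    exact ⟨Ψ a (ne_of_gt ha), Ψ_bracket a _⟩
end
end
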